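/- arXiv:0810.5259 — 5 statements merged into one kernel-verified Lean document; each statement's English description precedes it below -/
import Mathlib

section
/- For every ε > 0, every (z,t) ∈ V × 𝔱 and every j = 1, …, m, the function d_ε is differentiable at (z,t) and (X_j d_ε)(z,t) = d_ε(z,t)^{1−4k} ( |z|^{4k−2} ⟨z, e_j⟩ + 4 |z|^{2k−2} ⟨J_t(z), e_j⟩ ). -/
open MeasureTheory Real

noncomputable section

/-- `V = ℝ^m` with its standard inner ℝ product. -/
abbrev Vspace (m : ℕ) : Type := EuclideanSpace ℝ (Fin m)

/-- `𝔱 = ℝ^q` with its standard inner ℝ product. -/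
abbrev Tspace (q : ℕ) : Type := EuclideanSpace ℝ (Fin q)

/-- The vector field `X_j` applied to a function `f`: the directional derivative of `f`
at `(z,t)` in the direction `(e_j, (k/2)|z|^{2k-2}[z, e_j])`, where the bracket is `B`. -/
def Xop {m q : ℕ} (B : Vspace m →ₗ[ℝ] Vspace m →ₗ[ℝ] Tspace q)
    (e : Fin m → Vspace m) (k : ℝ) (f : Vspace m × Tspace q → ℝ) (j : Fin m)
    (p : Vspace m × Tspace q) : ℝ :=
  fderiv ℝ f p (e j, ((k / 2) * ‖p.1‖ ^ (2 * k - 2)) • B p.1 (e j))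

/-- `|∇_X f| = (Σ_j (X_j f)²)^{1/2}`. -/
def gradXnorm {m q : ℕ} (B : Vspace m →ₗ[ℝ] Vspace m →ₗ[ℝ] Tspace q)
    (e : Fin m → Vspace m) (k : ℝ) (f : Vspace m × Tspace q → ℝ)
    (p : Vspace m × Tspace q) : ℝ :=
  Real.sqrt (∑ j, (Xop B e k f j p) ^ 2)

/-- The homogeneous norm `d(z,t) = (|z|^{4k} + 16|t|²)^{1/(4k)}`. -/
def dfun {m q : ℕ} (k : ℝ) (p : Vspace m × Tspace q) : ℝ :=
  (‖p.1‖ ^ (4 * k) + 16 * ‖p.2‖ ^ (2 : ℝ)) ^ (1 / (4 * k))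

/-- The regularization `d_ε = (d^{4k} + ε^{4k})^{1/(4k)}`. -/
def dEps {m q : ℕ} (k ε : ℝ) (p : Vspace m × Tspace q) : ℝ :=
  (dfun k p ^ (4 * k) + ε ^ (4 * k)) ^ (1 / (4 * k))

/-- The degenerate `p`-Laplacian `L_{p,k} u = Σ_j X_j(|∇_X u|^{p-2} X_j u)`. -/
def Lpk {m q : ℕ} (B : Vspace m →ₗ[ℝ] Vspace m →ₗ[ℝ] Tspace q)
    (e : Fin m → Vspace m) (k p₀ : ℝ) (u : Vspace m × Tspace q → ℝ)
    (x : Vspace m × Tspace q) : ℝ :=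
  ∑ j, Xop B e k (fun y => gradXnorm B e k u y ^ (p₀ - 2) * Xop B e k u j y) j x

lemma inner_self_rpow' {E : Type*} [NormedAddCommGroup E] [InnerProductSpace ℝ E]
    (x : E) (a : ℝ) : (inner ℝ x x : ℝ) ^ a = ‖x‖ ^ (2 * a) := by
  rw [real_inner_self_eq_norm_sq, ← Real.rpow_natCast ‖x‖ 2,
    ← Real.rpow_mul (norm_nonneg _)]
  norm_num

set_option maxHeartbeats 2000000 in
/-- For every `ε > 0`, `(z,t)` and `j`, the function `d_ε` is
differentiable at `(z,t)` and
`X_j d_ε = d_ε^{1-4k}(|z|^{4k-2}⟨z,e_j⟩ + 4|z|^{2k-2}⟨J_t z, e_j⟩)`. -/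
theorem stmt2 {m q : ℕ} (hm : 1 ≤ m) (hq : 1 ≤ q)
    (B : Vspace m →ₗ[ℝ] Vspace m →ₗ[ℝ] Tspace q)
    (hskew : ∀ u v : Vspace m, B u v = -B v u)
    (J : Tspace q → Vspace m →ₗ[ℝ] Vspace m)
    (hJ : ∀ (t : Tspace q) (u v : Vspace m),
      (inner ℝ (J t u) v : ℝ) = inner ℝ t (B u v))
    (hH : ∀ (t : Tspace q) (z : Vspace m), J t (J t z) = -(‖t‖ ^ 2) • z)
    (e : OrthonormalBasis (Fin m) ℝ (Vspace m)) (k : ℝ) (hk : 1 ≤ k)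
    (ε : ℝ) (hε : 0 < ε) (z : Vspace m) (t : Tspace q) (j : Fin m) :
    DifferentiableAt ℝ (dEps (m := m) (q := q) k ε) (z, t) ∧
      Xop B (⇑e) k (dEps k ε) j (z, t) =
        dEps k ε (z, t) ^ (1 - 4 * k) *
          (‖z‖ ^ (4 * k - 2) * (inner ℝ z (e j) : ℝ) +
            4 * ‖z‖ ^ (2 * k - 2) * (inner ℝ (J t z) (e j) : ℝ)) := by
  have hk0 : (0:ℝ) < k := lt_of_lt_of_le one_pos hk
  have h4k : (4:ℝ) * k ≠ 0 := by positivity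
  -- the smooth representative of `dEps`
  have hEq : dEps (m := m) (q := q) k ε = fun p : Vspace m × Tspace q =>
      ((inner ℝ p.1 p.1 : ℝ) ^ (2 * k)
        + ((16:ℝ) * (inner ℝ p.2 p.2 : ℝ) + ε ^ (4 * k))) ^ (1 / (4 * k)) := by
    funext p
    have hA : (0:ℝ) ≤ ‖p.1‖ ^ (4 * k) + 16 * ‖p.2‖ ^ (2:ℝ) := by positivity
    have e1 : (inner ℝ p.1 p.1 : ℝ) ^ (2 * k) = ‖p.1‖ ^ (4 * k) := by
      rw [inner_self_rpow', show (2:ℝ) * (2 * k) = 4 * k by ring]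
    have e2 : (inner ℝ p.2 p.2 : ℝ) = ‖p.2‖ ^ (2:ℝ) := by
      rw [real_inner_self_eq_norm_sq, ← Real.rpow_natCast ‖p.2‖ 2]
      norm_num
    simp only [dEps, dfun, e1, e2]
    rw [← Real.rpow_mul hA, one_div, inv_mul_cancel₀ h4k, Real.rpow_one, add_assoc]
  -- derivatives of the pieces
  have h1 : HasFDerivAt (fun p : Vspace m × Tspace q => (inner ℝ p.1 p.1 : ℝ))
      ((fderivInnerCLM ℝ ((z, t).1, (z, t).1)).comp
        ((ContinuousLinearMap.fst ℝ (Vspace m) (Tspace q)).prod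
          (ContinuousLinearMap.fst ℝ (Vspace m) (Tspace q)))) (z, t) :=
    (hasFDerivAt_fst).inner ℝ (hasFDerivAt_fst)
  have h2 : HasFDerivAt
      (fun p : Vspace m × Tspace q => (16:ℝ) * (inner ℝ p.2 p.2 : ℝ) + ε ^ (4 * k))
      ((16:ℝ) • ((fderivInnerCLM ℝ ((z, t).2, (z, t).2)).comp
        ((ContinuousLinearMap.snd ℝ (Vspace m) (Tspace q)).prod
          (ContinuousLinearMap.snd ℝ (Vspace m) (Tspace q))))) (z, t) :=
    (((hasFDerivAt_snd).inner ℝ (hasFDerivAt_snd)).const_mul 16).add_const _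
  have h1' := h1.rpow_const (p := 2 * k) (Or.inr (by linarith))
  have hsum := h1'.add h2
  have hpos : (0:ℝ) <
      (inner ℝ z z : ℝ) ^ (2 * k) + ((16:ℝ) * (inner ℝ t t : ℝ) + ε ^ (4 * k)) := by
    have he : (0:ℝ) < ε ^ (4 * k) := Real.rpow_pos_of_pos hε _
    have h1n : (0:ℝ) ≤ (inner ℝ z z : ℝ) ^ (2 * k) :=
      Real.rpow_nonneg real_inner_self_nonneg _
    have h2n : (0:ℝ) ≤ (inner ℝ t t : ℝ) := real_inner_self_nonneg
    linarith
  have hD := hsum.rpow_const (p := 1 / (4 * k)) (Or.inl (ne_of_gt hpos))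
  constructor
  · rw [hEq]
    exact hD.differentiableAt
  · have hfd := hD.fderiv
    simp only [Xop, hEq]
    simp only [Pi.add_apply] at hfd
    rw [hfd]
    simp only [ContinuousLinearMap.smul_apply, ContinuousLinearMap.add_apply,
      ContinuousLinearMap.coe_comp', Function.comp_apply, ContinuousLinearMap.prod_apply,
      ContinuousLinearMap.coe_fst', ContinuousLinearMap.coe_snd', fderivInnerCLM_apply,
      smul_eq_mul, inner_smul_right]
    have hbr : (inner ℝ t (B z (e j)) : ℝ) = (inner ℝ (J t z) (e j) : ℝ) := (hJ t z (e j)).symm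
    have hzz : (inner ℝ z z : ℝ) ^ (2 * k - 1) = ‖z‖ ^ (4 * k - 2) := by
      rw [inner_self_rpow', show (2:ℝ) * (2 * k - 1) = 4 * k - 2 by ring]
    rw [← Real.rpow_mul hpos.le,
      show (1 / (4 * k)) * (1 - 4 * k) = 1 / (4 * k) - 1 by field_simp]
    simp only [real_inner_comm (e j) z, real_inner_comm (B z (e j)) t, real_inner_smul_left,
      inner_smul_right, smul_eq_mul]
    rw [hzz, show (inner ℝ ((B z) (e j)) t : ℝ) = inner ℝ ((J t) z) (e j) from
      (real_inner_comm _ _).trans (hJ t z (e j)).symm]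
    field_simp
    ring
end
end

section
/- For every ε > 0 and every (z,t) ∈ V × 𝔱 one has |∇_X d_ε|²(z,t) = Σ_{j=1}^m ((X_j d_ε)(z,t))² = d(z,t)^{4k} · d_ε(z,t)^{2−8k} · |z|^{4k−2}. -/
open MeasureTheory Real

noncomputable section

set_option maxHeartbeats 1000000

lemma aux_collapse (k : ℝ) (hk : 1 ≤ k) (x : ℝ) (hx : 0 ≤ x) :
    (x ^ (1/(4*k))) ^ (4*k) = x := by
  have hk0 : (0:ℝ) < k := lt_of_lt_of_le one_pos hk
  rw [← Real.rpow_mul hx]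
  rw [show (1/(4*k))*(4*k) = 1 by field_simp]
  exact Real.rpow_one x

lemma aux_sq_rpow (c : ℝ) (a : ℝ) (ha : 0 ≤ a) : ((a^2) : ℝ) ^ c = a ^ (2*c) := by
  rw [← Real.rpow_natCast a 2, ← Real.rpow_mul ha]
  norm_num

open RealInnerProductSpace in
lemma aux_dfun4k {m q : ℕ} (k : ℝ) (hk : 1 ≤ k) (z : Vspace m) (t : Tspace q) :
    dfun k (z, t) ^ (4*k) = (⟪z,z⟫) ^ (2*k) + 16 * ⟪t,t⟫ := by
  have h0 : (0:ℝ) ≤ ‖z‖ ^ (4*k) + 16 * ‖t‖ ^ (2:ℝ) := by positivity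
  rw [dfun, aux_collapse k hk _ h0, real_inner_self_eq_norm_sq, real_inner_self_eq_norm_sq,
    aux_sq_rpow (2*k) ‖z‖ (norm_nonneg z)]
  norm_num [show (2:ℝ)*(2*k) = 4*k from by ring]

open RealInnerProductSpace in
lemma aux_dEps_eq {m q : ℕ} (k ε : ℝ) (hk : 1 ≤ k) :
    (dEps (m := m) (q := q) k ε) =
      fun p => ((⟪p.1, p.1⟫) ^ (2*k) + 16 * ⟪p.2, p.2⟫ + ε ^ (4*k)) ^ (1/(4*k)) := by
  funext p
  rw [dEps, aux_dfun4k k hk p.1 p.2]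

open RealInnerProductSpace in
lemma aux_fderiv {m q : ℕ} (k ε : ℝ) (hk : 1 ≤ k) (hε : 0 < ε) (z : Vspace m) (t : Tspace q)
    (v : Vspace m × Tspace q) :
    fderiv ℝ (fun p : Vspace m × Tspace q =>
        ((⟪p.1, p.1⟫) ^ (2*k) + 16 * ⟪p.2, p.2⟫ + ε ^ (4*k)) ^ (1/(4*k))) (z, t) v
      = (1/(4*k) * ((⟪z,z⟫)^(2*k) + 16*⟪t,t⟫ + ε^(4*k)) ^ (1/(4*k)-1)) *
          (2*k * (⟪z,z⟫)^(2*k-1) * (2 * ⟪z, v.1⟫) + 16 * (2 * ⟪t, v.2⟫)) := by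
  have hk0 : (0:ℝ) < k := lt_of_lt_of_le one_pos hk
  have h1 := (hasFDerivAt_fst (p := ((z,t) : Vspace m × Tspace q))).inner ℝ
      (hasFDerivAt_fst (p := ((z,t) : Vspace m × Tspace q)))
  have h2 := (Real.hasDerivAt_rpow_const (x := ⟪z,z⟫) (p := 2*k)
      (Or.inr (by linarith))).comp_hasFDerivAt (z,t) h1
  have h3 := ((hasFDerivAt_snd (p := ((z,t) : Vspace m × Tspace q))).inner ℝ
      (hasFDerivAt_snd (p := ((z,t) : Vspace m × Tspace q)))).const_mul (16:ℝ)
  have h4 := (h2.add h3).add_const (ε ^ (4*k))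
  have hS : (0:ℝ) < (⟪z,z⟫)^(2*k) + 16*⟪t,t⟫ + ε^(4*k) := by
    have h1' : (0:ℝ) ≤ (⟪z,z⟫)^(2*k) := Real.rpow_nonneg real_inner_self_nonneg _
    have h2' : (0:ℝ) ≤ ⟪t,t⟫ := real_inner_self_nonneg
    have h3' : (0:ℝ) < ε^(4*k) := Real.rpow_pos_of_pos hε _
    linarith
  have h5 := (Real.hasDerivAt_rpow_const (x := (⟪z,z⟫)^(2*k) + 16*⟪t,t⟫ + ε^(4*k))
      (p := 1/(4*k)) (Or.inl hS.ne')).comp_hasFDerivAt (z,t) h4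
  simp only [Function.comp_def] at h5
  rw [HasFDerivAt.fderiv (f := fun p : Vspace m × Tspace q =>
      ((⟪p.1, p.1⟫) ^ (2*k) + 16 * ⟪p.2, p.2⟫ + ε ^ (4*k)) ^ (1/(4*k))) h5]
  simp only [ContinuousLinearMap.smul_apply, ContinuousLinearMap.add_apply,
    ContinuousLinearMap.comp_apply, ContinuousLinearMap.prod_apply,
    ContinuousLinearMap.coe_fst', ContinuousLinearMap.coe_snd',
    fderivInnerCLM_apply, smul_eq_mul, real_inner_comm v.1 z, real_inner_comm v.2 t]
  ring

/-- `|∇_X d_ε|² = Σ_j (X_j d_ε)² = d^{4k} d_ε^{2-8k} |z|^{4k-2}`. -/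
theorem stmt3 {m q : ℕ} (hm : 1 ≤ m) (hq : 1 ≤ q)
    (B : Vspace m →ₗ[ℝ] Vspace m →ₗ[ℝ] Tspace q)
    (hskew : ∀ u v : Vspace m, B u v = -B v u)
    (J : Tspace q → Vspace m →ₗ[ℝ] Vspace m)
    (hJ : ∀ (t : Tspace q) (u v : Vspace m),
      (inner ℝ (J t u) v : ℝ) = inner ℝ t (B u v))
    (hH : ∀ (t : Tspace q) (z : Vspace m), J t (J t z) = -(‖t‖ ^ 2) • z)
    (e : OrthonormalBasis (Fin m) ℝ (Vspace m)) (k : ℝ) (hk : 1 ≤ k)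
    (ε : ℝ) (hε : 0 < ε) (z : Vspace m) (t : Tspace q) :
    ∑ j, (Xop B (⇑e) k (dEps k ε) j (z, t)) ^ 2 =
      dfun k (z, t) ^ (4 * k) * dEps k ε (z, t) ^ (2 - 8 * k) *
        ‖z‖ ^ (4 * k - 2) := by
  classical
  have hk0 : (0:ℝ) < k := lt_of_lt_of_le one_pos hk
  set u : ℝ := (inner ℝ z z : ℝ) with hu
  set τ2 : ℝ := (inner ℝ t t : ℝ) with hτ2
  set S : ℝ := u^(2*k) + 16*τ2 + ε^(4*k) with hSdef
  have hS : (0:ℝ) < S := by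
    have h1' : (0:ℝ) ≤ u^(2*k) := Real.rpow_nonneg real_inner_self_nonneg _
    have h2' : (0:ℝ) ≤ τ2 := real_inner_self_nonneg
    have h3' : (0:ℝ) < ε^(4*k) := Real.rpow_pos_of_pos hε _
    linarith
  set σ : ℝ := 1/(4*k) * S ^ (1/(4*k)-1) with hσ
  set c : ℝ := (k/2) * ‖z‖ ^ (2*k-2) with hc
  set w : Vspace m := (4*k*u^(2*k-1)) • z + (32*c) • (J t z) with hw
  -- each X_j
  have hX : ∀ j, Xop B (⇑e) k (dEps k ε) j (z, t) = σ * (inner ℝ w (e j) : ℝ) := by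
    intro j
    rw [Xop, aux_dEps_eq k ε hk]
    have := aux_fderiv k ε hk hε z t (e j, ((k/2) * ‖(z,t).1‖ ^ (2*k-2)) • B (z,t).1 (e j))
    rw [this]
    simp only [hw, inner_add_left, real_inner_smul_left, real_inner_smul_right]
    rw [show ((inner ℝ (J t z) (e j)) : ℝ) = (inner ℝ t (B z (e j)) : ℝ) from hJ t z (e j)]
    simp only [hσ, hc, hu, hτ2]
    ring
  -- inner ℝ products
  have hBzz : B z z = 0 := by
    have h2 : B z z + B z z = 0 := by nth_rewrite 2 [hskew z z]; simp
    have h3 : (2:ℝ) • B z z = 0 := by rw [two_smul]; exact h2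
    simpa using (smul_eq_zero.mp h3).resolve_left (by norm_num)
  have hzJ : (inner ℝ z (J t z) : ℝ) = 0 := by
    rw [real_inner_comm, hJ t z z, hBzz, inner_zero_right]
  have hJJ : (inner ℝ (J t z) (J t z) : ℝ) = ‖t‖^2 * u := by
    rw [hJ t z (J t z), show B z (J t z) = -(B (J t z) z) from hskew z (J t z),
      inner_neg_right, ← hJ t (J t z) z, hH t z, hu]
    simp [inner_smul_left]
  have hww : (inner ℝ w w : ℝ) = (4*k*u^(2*k-1))^2 * u + (32*c)^2 * (‖t‖^2 * u) := by
    simp only [hw, inner_add_left, inner_add_right, real_inner_smul_left, real_inner_smul_right,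
      hJJ, hzJ]
    rw [real_inner_comm z (J t z), hzJ, ← hu]
    ring
  -- sum
  have hsum : ∑ j, (Xop B (⇑e) k (dEps k ε) j (z, t)) ^ 2 = σ^2 * (inner ℝ w w : ℝ) := by
    simp only [hX, mul_pow]
    rw [← Finset.mul_sum]
    congr 1
    have := e.sum_inner_mul_inner w w
    calc ∑ j, ((inner ℝ w (e j) : ℝ))^2 = ∑ j, (inner ℝ w (e j) : ℝ) * (inner ℝ (e j) w : ℝ) := by
          refine Finset.sum_congr rfl fun j _ => ?_
          rw [real_inner_comm (e j) w, sq]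
      _ = (inner ℝ w w : ℝ) := e.sum_inner_mul_inner w w
  rw [hsum, hww]
  -- RHS rewriting
  have hdf : dfun k (z,t) ^ (4*k) = u^(2*k) + 16*τ2 := aux_dfun4k k hk z t
  have hdE : dEps k ε (z,t) = S ^ (1/(4*k)) := by
    rw [aux_dEps_eq k ε hk]
  rw [hdf, hdE]
  have hexp : (S ^ (1/(4*k))) ^ (2-8*k) = S ^ ((2-8*k)/(4*k)) := by
    rw [← Real.rpow_mul hS.le]
    congr 1
    field_simp
  have hσ2 : σ^2 = 1/(16*k^2) * S ^ ((2-8*k)/(4*k)) := by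
    rw [hσ, mul_pow, sq (S ^ (1/(4*k)-1)), ← Real.rpow_add hS]
    rw [show (1/(4*k)-1) + (1/(4*k)-1) = (2-8*k)/(4*k) by field_simp; ring]
    congr 1
    field_simp
    ring
  rw [hexp, hσ2]
  -- now pure algebra in n = ‖z‖, τ
  have hu2 : u = ‖z‖^2 := real_inner_self_eq_norm_sq z
  have hτ : τ2 = ‖t‖^2 := real_inner_self_eq_norm_sq t
  have hupow : ∀ a : ℝ, u ^ a = ‖z‖ ^ (2*a) := by
    intro a; rw [hu2, aux_sq_rpow a ‖z‖ (norm_nonneg z)]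
  rw [hupow (2*k-1), hupow (2*k), hu2, hτ, hc]
  rw [show (2:ℝ)*(2*k-1) = 4*k-2 by ring, show (2:ℝ)*(2*k) = 4*k by ring]
  set n : ℝ := ‖z‖ with hn
  have hn0 : 0 ≤ n := norm_nonneg z
  rcases eq_or_lt_of_le hn0 with hz0 | hz0
  · -- n = 0
    rw [← hz0]
    rw [Real.zero_rpow (ne_of_gt (by linarith : (0:ℝ) < 4*k-2)),
        Real.zero_rpow (ne_of_gt (by linarith : (0:ℝ) < 4*k))]
    ring
  · have hmerge : ∀ a b : ℝ, n ^ a * n ^ b = n ^ (a+b) := fun a b => (Real.rpow_add hz0 a b).symm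
    have hn2 : (n^2 : ℝ) = n^(2:ℝ) := by
      rw [← Real.rpow_natCast n 2]; norm_num
    have e1 : (4*k*n^(4*k-2))^2 * n^2 = 16*k^2 * n^(8*k-2) := by
      calc (4*k*n^(4*k-2))^2 * n^2
          = 16*k^2 * (n^(4*k-2)*n^(4*k-2)*n^(2:ℝ)) := by rw [hn2]; ring
        _ = 16*k^2 * n^((4*k-2)+(4*k-2)+2) := by rw [hmerge, hmerge]
        _ = 16*k^2 * n^(8*k-2) := by rw [show ((4*k-2)+(4*k-2)+2 : ℝ) = 8*k-2 by ring]
    have e2 : (32*(k/2 * n^(2*k-2)))^2 * (‖t‖^2 * n^2) = 256*k^2*‖t‖^2 * n^(4*k-2) := by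
      calc (32*(k/2 * n^(2*k-2)))^2 * (‖t‖^2 * n^2)
          = 256*k^2*‖t‖^2 * (n^(2*k-2)*n^(2*k-2)*n^(2:ℝ)) := by rw [hn2]; ring
        _ = 256*k^2*‖t‖^2 * n^((2*k-2)+(2*k-2)+2) := by rw [hmerge, hmerge]
        _ = 256*k^2*‖t‖^2 * n^(4*k-2) := by rw [show ((2*k-2)+(2*k-2)+2 : ℝ) = 4*k-2 by ring]
    have e3 : n^(4*k) * n^(4*k-2) = n^(8*k-2) := by
      rw [hmerge, show (4*k) + (4*k-2) = 8*k-2 by ring]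
    rw [e1, e2]
    field_simp
    rw [show k*8-2 = 8*k-2 by ring, show k*4-2 = 4*k-2 by ring, show k*4 = 4*k by ring]
    linear_combination (-16) * e3
end
end

section
/- For every ε > 0 and every (z,t) ∈ V × 𝔱 with z ≠ 0 one has Σ_{j=1}^m (X_j² (d_ε^{4k}))(z,t) = 4k(4k − 2 + Q) |z|^{4k−2}, where Q = m + 2kq. -/
open MeasureTheory Real

noncomputable section

open RealInnerProductSpace

/-- helper: `⟪x,x⟫ ^ c = ‖x‖ ^ (2c)` (rpow). -/
lemma aux_inner_self_rpow {E : Type*} [NormedAddCommGroup E] [InnerProductSpace ℝ E]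
    (x : E) (c : ℝ) : (⟪x, x⟫ : ℝ) ^ c = ‖x‖ ^ (2 * c) := by
  rw [real_inner_self_eq_norm_sq, ← Real.rpow_natCast ‖x‖ 2,
    ← Real.rpow_mul (norm_nonneg x)]
  norm_num

set_option maxHeartbeats 2000000 in
/-- For `z ≠ 0`, `Σ_j X_j²(d_ε^{4k}) = 4k(4k-2+Q)|z|^{4k-2}`,
where `Q = m + 2kq`. -/
theorem stmt4 {m q : ℕ} (hm : 1 ≤ m) (hq : 1 ≤ q)
    (B : Vspace m →ₗ[ℝ] Vspace m →ₗ[ℝ] Tspace q)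
    (hskew : ∀ u v : Vspace m, B u v = -B v u)
    (J : Tspace q → Vspace m →ₗ[ℝ] Vspace m)
    (hJ : ∀ (t : Tspace q) (u v : Vspace m),
      (inner ℝ (J t u) v : ℝ) = inner ℝ t (B u v))
    (hH : ∀ (t : Tspace q) (z : Vspace m), J t (J t z) = -(‖t‖ ^ 2) • z)
    (e : OrthonormalBasis (Fin m) ℝ (Vspace m)) (k : ℝ) (hk : 1 ≤ k)
    (Q : ℝ) (hQ : Q = m + 2 * k * q)
    (ε : ℝ) (hε : 0 < ε) (z : Vspace m) (t : Tspace q) (hz : z ≠ 0) :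
    ∑ j, Xop B (⇑e) k (Xop B (⇑e) k (fun y => dEps k ε y ^ (4 * k)) j) j (z, t) =
      4 * k * (4 * k - 2 + Q) * ‖z‖ ^ (4 * k - 2) := by
  have hk0 : (0:ℝ) < k := by linarith
  have h4k : (0:ℝ) < 4 * k := by linarith
  have h4k' : (4:ℝ) * k ≠ 0 := ne_of_gt h4k
  -- Step A : rewrite the function
  have hAfun : (fun y : Vspace m × Tspace q => dEps k ε y ^ (4 * k))
      = (fun y : Vspace m × Tspace q =>
          (⟪y.1, y.1⟫ : ℝ) ^ (2 * k) + (16 * (⟪y.2, y.2⟫ : ℝ) + ε ^ (4 * k))) := by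
    funext y
    have h1 : (0:ℝ) ≤ ‖y.1‖ ^ (4 * k) + 16 * ‖y.2‖ ^ (2 : ℝ) := by positivity
    have h2 : (0:ℝ) ≤ ((‖y.1‖ ^ (4 * k) + 16 * ‖y.2‖ ^ (2:ℝ)) ^ (1 / (4 * k))) ^ (4 * k)
        + ε ^ (4 * k) := by positivity
    unfold dEps dfun
    rw [← Real.rpow_mul h2, one_div, inv_mul_cancel₀ h4k', Real.rpow_one,
      ← Real.rpow_mul h1, inv_mul_cancel₀ h4k', Real.rpow_one]
    rw [aux_inner_self_rpow y.1 (2 * k), real_inner_self_eq_norm_sq y.2]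
    rw [show (2:ℝ) * (2 * k) = 4 * k by ring,
      show (‖y.2‖ ^ 2 : ℝ) = ‖y.2‖ ^ ((2:ℕ):ℝ) from (Real.rpow_natCast _ 2).symm]
    push_cast
    ring
  rw [hAfun]
  -- notation shortcuts
  set F : Vspace m × Tspace q → ℝ := fun y =>
    (⟪y.1, y.1⟫ : ℝ) ^ (2 * k) + (16 * (⟪y.2, y.2⟫ : ℝ) + ε ^ (4 * k)) with hF
  -- first derivative formula
  have hXop1 : ∀ (j : Fin m) (p : Vspace m × Tspace q), p.1 ≠ 0 →
      Xop B (⇑e) k F j p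
        = 4 * k * ((⟪p.1, p.1⟫ : ℝ) ^ (2 * k - 1) * ⟪p.1, e j⟫)
          + 16 * k * ((⟪p.1, p.1⟫ : ℝ) ^ (k - 1) * ⟪p.2, B p.1 (e j)⟫) := by
    intro j p hp
    have hM : HasFDerivAt (fun y : Vspace m × Tspace q => (⟪y.1, y.1⟫ : ℝ))
        ((fderivInnerCLM ℝ (p.1, p.1)).comp
          ((ContinuousLinearMap.fst ℝ (Vspace m) (Tspace q)).prod
            (ContinuousLinearMap.fst ℝ (Vspace m) (Tspace q)))) p :=
      hasFDerivAt_fst.inner ℝ hasFDerivAt_fst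
    have hN : HasFDerivAt (fun y : Vspace m × Tspace q => (⟪y.2, y.2⟫ : ℝ))
        ((fderivInnerCLM ℝ (p.2, p.2)).comp
          ((ContinuousLinearMap.snd ℝ (Vspace m) (Tspace q)).prod
            (ContinuousLinearMap.snd ℝ (Vspace m) (Tspace q)))) p :=
      hasFDerivAt_snd.inner ℝ hasFDerivAt_snd
    have hFd := ((hM.rpow_const (Or.inr (by linarith : (1:ℝ) ≤ 2 * k))).add
      ((hN.const_mul 16).add_const (ε ^ (4 * k))))
    unfold F
    unfold Xop
    rw [HasFDerivAt.fderiv (f := fun y : Vspace m × Tspace q =>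
      (⟪y.1, y.1⟫ : ℝ) ^ (2 * k) + (16 * (⟪y.2, y.2⟫ : ℝ) + ε ^ (4 * k))) hFd]
    simp only [ContinuousLinearMap.add_apply, ContinuousLinearMap.coe_smul',
      Pi.smul_apply, ContinuousLinearMap.comp_apply, ContinuousLinearMap.prod_apply,
      ContinuousLinearMap.coe_fst', ContinuousLinearMap.coe_snd',
      fderivInnerCLM_apply, smul_eq_mul]
    rw [real_inner_smul_left, real_inner_smul_right, real_inner_comm (e j) p.1,
      real_inner_comm (B p.1 (e j)) p.2]
    rw [show ‖p.1‖ ^ (2 * k - 2) = (⟪p.1, p.1⟫ : ℝ) ^ (k - 1) by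
      rw [aux_inner_self_rpow p.1 (k - 1)]; congr 1; ring]
    ring
  -- second derivative per j
  have hM0 : (0:ℝ) < ⟪z, z⟫ := by
    rw [real_inner_self_eq_norm_sq]
    have : ‖z‖ ≠ 0 := norm_ne_zero_iff.mpr hz
    positivity
  have hB0 : ∀ u : Vspace m, B u u = 0 := by
    intro u
    have h2 : (2:ℝ) • B u u = 0 := by
      rw [two_smul]; nth_rewrite 1 [hskew u u]; exact neg_add_cancel _
    exact (smul_eq_zero.mp h2).resolve_left (by norm_num)
  have hee : ∀ j : Fin m, (⟪e j, e j⟫ : ℝ) = 1 := by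
    intro j
    rw [real_inner_self_eq_norm_sq, e.orthonormal.1 j]; norm_num
  have key0 : ∀ (j : Fin m) (p : Vspace m × Tspace q), p.1 ≠ 0 →
      Xop B (⇑e) k (Xop B (⇑e) k F j) j p
        = 4 * k * (⟪p.1, p.1⟫ : ℝ) ^ (2 * k - 1)
          + 8 * k * (2 * k - 1) * (⟪p.1, p.1⟫ : ℝ) ^ (2 * k - 2)
              * (⟪p.1, e j⟫ * ⟪e j, p.1⟫)
          + 32 * k * (k - 1) * (⟪p.1, p.1⟫ : ℝ) ^ (k - 2)
              * (⟪p.1, e j⟫ * ⟪e j, J p.2 p.1⟫)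
          + 8 * k ^ 2 * ((⟪p.1, p.1⟫ : ℝ) ^ (k - 1) * (⟪p.1, p.1⟫ : ℝ) ^ (k - 1))
              * ⟪B p.1 (e j), B p.1 (e j)⟫ := by
    intro j p hp
    have hM0' : (0:ℝ) < ⟪p.1, p.1⟫ := by
      rw [real_inner_self_eq_norm_sq]
      have : ‖p.1‖ ≠ 0 := norm_ne_zero_iff.mpr hp
      positivity
    have hev : (Xop B (⇑e) k F j) =ᶠ[nhds p] (fun p : Vspace m × Tspace q =>
        4 * k * ((⟪p.1, p.1⟫ : ℝ) ^ (2 * k - 1) * ⟪p.1, e j⟫)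
          + 16 * k * ((⟪p.1, p.1⟫ : ℝ) ^ (k - 1) * ⟪p.2, B p.1 (e j)⟫)) := by
      refine Filter.eventuallyEq_of_mem
        (((isOpen_ne (x := (0 : Vspace m))).preimage continuous_fst).mem_nhds hp)
        (fun p hp' => hXop1 j p hp')
    rw [show Xop B (⇑e) k (Xop B (⇑e) k F j) j p
        = fderiv ℝ (Xop B (⇑e) k F j) p
            (e j, ((k / 2) * ‖p.1‖ ^ (2 * k - 2)) • B p.1 (e j)) from rfl]
    rw [hev.fderiv_eq]
    -- differentiate the explicit formula at p
    have hM : HasFDerivAt (fun y : Vspace m × Tspace q => (⟪y.1, y.1⟫ : ℝ))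
        ((fderivInnerCLM ℝ (p.1, p.1)).comp
          ((ContinuousLinearMap.fst ℝ (Vspace m) (Tspace q)).prod
            (ContinuousLinearMap.fst ℝ (Vspace m) (Tspace q)))) p :=
      hasFDerivAt_fst.inner ℝ hasFDerivAt_fst
    have hA := hM.rpow_const (p := 2 * k - 1) (Or.inr (by linarith))
    have hC := hM.rpow_const (p := k - 1) (Or.inl (ne_of_gt hM0'))
    have hB1 : HasFDerivAt (fun y : Vspace m × Tspace q => (⟪y.1, e j⟫ : ℝ))
        ((fderivInnerCLM ℝ (p.1, e j)).comp
          ((ContinuousLinearMap.fst ℝ (Vspace m) (Tspace q)).prod 0)) p :=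
      hasFDerivAt_fst.inner ℝ (hasFDerivAt_const (e j) _)
    have hBc : HasFDerivAt (fun y : Vspace m × Tspace q => B y.1 (e j))
        ((LinearMap.toContinuousLinearMap (B.flip (e j))).comp
          (ContinuousLinearMap.fst ℝ (Vspace m) (Tspace q))) p :=
      ((LinearMap.toContinuousLinearMap (B.flip (e j))).hasFDerivAt).comp _ hasFDerivAt_fst
    have hD : HasFDerivAt (fun y : Vspace m × Tspace q => (⟪y.2, B y.1 (e j)⟫ : ℝ))
        ((fderivInnerCLM ℝ (p.2, B p.1 (e j))).comp
          ((ContinuousLinearMap.snd ℝ (Vspace m) (Tspace q)).prod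
            ((LinearMap.toContinuousLinearMap (B.flip (e j))).comp
              (ContinuousLinearMap.fst ℝ (Vspace m) (Tspace q))))) p :=
      hasFDerivAt_snd.inner ℝ hBc
    have hTot := (((hA.mul hB1).const_mul (4 * k)).add ((hC.mul hD).const_mul (16 * k)))
    rw [HasFDerivAt.fderiv (f := fun p : Vspace m × Tspace q =>
      4 * k * ((⟪p.1, p.1⟫ : ℝ) ^ (2 * k - 1) * ⟪p.1, e j⟫)
        + 16 * k * ((⟪p.1, p.1⟫ : ℝ) ^ (k - 1) * ⟪p.2, B p.1 (e j)⟫)) hTot]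
    simp only [ContinuousLinearMap.add_apply, ContinuousLinearMap.coe_smul',
      Pi.smul_apply, ContinuousLinearMap.comp_apply, ContinuousLinearMap.prod_apply,
      ContinuousLinearMap.coe_fst', ContinuousLinearMap.coe_snd',
      ContinuousLinearMap.zero_apply, fderivInnerCLM_apply, smul_eq_mul,
      inner_zero_right, LinearMap.coe_toContinuousLinearMap', LinearMap.flip_apply]
    rw [hB0 (e j)]
    simp only [inner_zero_right, map_zero, LinearMap.zero_apply]
    rw [real_inner_smul_left, real_inner_comm (e j) p.1, hee j]
    rw [show (⟪p.2, B p.1 (e j)⟫ : ℝ) = ⟪J p.2 p.1, e j⟫ from (hJ p.2 p.1 (e j)).symm]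
    rw [real_inner_comm (J p.2 p.1) (e j)]
    rw [show ‖p.1‖ ^ (2 * k - 2) = (⟪p.1, p.1⟫ : ℝ) ^ (k - 1) by
      rw [aux_inner_self_rpow p.1 (k - 1)]; congr 1; ring]
    ring
  have key : ∀ j : Fin m,
      Xop B (⇑e) k (Xop B (⇑e) k F j) j (z, t)
        = 4 * k * (⟪z, z⟫ : ℝ) ^ (2 * k - 1)
          + 8 * k * (2 * k - 1) * (⟪z, z⟫ : ℝ) ^ (2 * k - 2) * (⟪z, e j⟫ * ⟪e j, z⟫)
          + 32 * k * (k - 1) * (⟪z, z⟫ : ℝ) ^ (k - 2) * (⟪z, e j⟫ * ⟪e j, J t z⟫)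
          + 8 * k ^ 2 * ((⟪z, z⟫ : ℝ) ^ (k - 1) * (⟪z, z⟫ : ℝ) ^ (k - 1))
              * ⟪B z (e j), B z (e j)⟫ := fun j => key0 j (z, t) hz
  -- summation
  have S1 : ∑ j, (⟪z, e j⟫ : ℝ) * ⟪e j, z⟫ = ⟪z, z⟫ := e.sum_inner_mul_inner z z
  have S2 : ∑ j, (⟪z, e j⟫ : ℝ) * ⟪e j, J t z⟫ = 0 := by
    rw [e.sum_inner_mul_inner z (J t z), real_inner_comm]
    rw [hJ t z z, hB0 z, inner_zero_right]
  have hJJ : ∀ (s : Tspace q) (x : Vspace m),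
      (⟪J s x, J s x⟫ : ℝ) = ‖s‖ ^ 2 * ⟪x, x⟫ := by
    intro s x
    rw [hJ s x (J s x), hskew x (J s x), inner_neg_right, ← hJ s (J s x) x, hH s x,
      real_inner_smul_left]
    ring
  have S3 : ∑ j, (⟪B z (e j), B z (e j)⟫ : ℝ) = q * ⟪z, z⟫ := by
    have hterm : ∀ j : Fin m, (⟪B z (e j), B z (e j)⟫ : ℝ)
        = ∑ i, (⟪J ((EuclideanSpace.basisFun (Fin q) ℝ) i) z, e j⟫ : ℝ)
            * ⟪e j, J ((EuclideanSpace.basisFun (Fin q) ℝ) i) z⟫ := by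
      intro j
      rw [← (EuclideanSpace.basisFun (Fin q) ℝ).sum_inner_mul_inner
        (B z (e j)) (B z (e j))]
      refine Finset.sum_congr rfl fun i _ => ?_
      rw [← hJ _ z (e j),
        real_inner_comm ((EuclideanSpace.basisFun (Fin q) ℝ) i) (B z (e j)),
        ← hJ _ z (e j),
        real_inner_comm (J ((EuclideanSpace.basisFun (Fin q) ℝ) i) z) (e j)]
    rw [Finset.sum_congr rfl fun j _ => hterm j, Finset.sum_comm]
    have : ∀ i : Fin q,
        (∑ j, (⟪J ((EuclideanSpace.basisFun (Fin q) ℝ) i) z, e j⟫ : ℝ)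
          * ⟪e j, J ((EuclideanSpace.basisFun (Fin q) ℝ) i) z⟫) = ⟪z, z⟫ := by
      intro i
      rw [e.sum_inner_mul_inner, hJJ, (EuclideanSpace.basisFun (Fin q) ℝ).orthonormal.1 i]
      norm_num
    rw [Finset.sum_congr rfl fun i _ => this i, Finset.sum_const, Finset.card_univ,
      Fintype.card_fin, nsmul_eq_mul]
  rw [Finset.sum_congr rfl fun j _ => key j]
  simp only [Finset.sum_add_distrib, ← Finset.mul_sum, S1, S2, S3, Finset.sum_const,
    Finset.card_univ, Fintype.card_fin, nsmul_eq_mul]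
  -- final algebra
  have e1 : (⟪z, z⟫ : ℝ) ^ (2 * k - 2) * ⟪z, z⟫ = (⟪z, z⟫ : ℝ) ^ (2 * k - 1) := by
    rw [← Real.rpow_add_one (ne_of_gt hM0)]; congr 1; ring
  have e2 : (⟪z, z⟫ : ℝ) ^ (k - 1) * (⟪z, z⟫ : ℝ) ^ (k - 1) * ⟪z, z⟫
      = (⟪z, z⟫ : ℝ) ^ (2 * k - 1) := by
    rw [← Real.rpow_add hM0, ← Real.rpow_add_one (ne_of_gt hM0)]; congr 1; ring
  have e3 : ‖z‖ ^ (4 * k - 2) = (⟪z, z⟫ : ℝ) ^ (2 * k - 1) := by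
    rw [aux_inner_self_rpow z (2 * k - 1)]; congr 1; ring
  rw [e3, hQ]
  linear_combination (8 * k * (2 * k - 1)) * e1 + (8 * k ^ 2 * q) * e2
end
end

section
/- For every ε > 0 and every (z,t) ∈ V × 𝔱 with z ≠ 0 one has Σ_{j=1}^m (X_j² d_ε)(z,t) = d_ε(z,t)^{1−4k} |z|^{4k−2} ( 4k + Q − 2 − (4k−1) d(z,t)^{4k} d_ε(z,t)^{−4k} ), where Q = m + 2kq. -/
open MeasureTheory Real

noncomputable section

/-! ### Auxiliary material -/

def gfun {m q : ℕ} (k ε : ℝ) (p : Vspace m × Tspace q) : ℝ :=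
  (inner ℝ p.1 p.1 : ℝ) ^ (2 * k) + 16 * (inner ℝ p.2 p.2 : ℝ) + ε ^ (4 * k)

lemma norm_rpow_even {n : ℕ} (x : EuclideanSpace ℝ (Fin n)) (r : ℝ) :
    ‖x‖ ^ (2 * r) = (inner ℝ x x : ℝ) ^ r := by
  rw [real_inner_self_eq_norm_sq, ← Real.rpow_natCast ‖x‖ 2,
    ← Real.rpow_mul (norm_nonneg x)]
  norm_num

lemma dfun_rpow {m q : ℕ} (k : ℝ) (hk : 1 ≤ k) (p : Vspace m × Tspace q) :
    dfun k p ^ (4 * k) = (inner ℝ p.1 p.1 : ℝ) ^ (2 * k) + 16 * (inner ℝ p.2 p.2 : ℝ) := by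
  have hk0 : (0:ℝ) < 4 * k := by linarith
  have hA : 0 ≤ ‖p.1‖ ^ (4 * k) + 16 * ‖p.2‖ ^ (2 : ℝ) := by positivity
  rw [dfun, ← Real.rpow_mul hA, one_div, inv_mul_cancel₀ (ne_of_gt hk0), Real.rpow_one]
  have h1 : ‖p.1‖ ^ (4 * k) = (inner ℝ p.1 p.1 : ℝ) ^ (2 * k) := by
    rw [← norm_rpow_even]; ring_nf
  have h2 : ‖p.2‖ ^ (2:ℝ) = (inner ℝ p.2 p.2 : ℝ) := by
    have := norm_rpow_even p.2 1
    rw [mul_one, Real.rpow_one] at this; exact this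
  rw [h1, h2]

lemma dEps_eq {m q : ℕ} (k ε : ℝ) (hk : 1 ≤ k) (p : Vspace m × Tspace q) :
    dEps k ε p = gfun k ε p ^ (1 / (4 * k)) := by
  rw [dEps, dfun_rpow k hk, gfun]

lemma gfun_pos {m q : ℕ} (k ε : ℝ) (hε : 0 < ε) (p : Vspace m × Tspace q) :
    0 < gfun k ε p := by
  have h1 : (0:ℝ) < ε ^ (4 * k) := Real.rpow_pos_of_pos hε _
  have h2 : (0:ℝ) ≤ (inner ℝ p.1 p.1 : ℝ) ^ (2 * k) := Real.rpow_nonneg real_inner_self_nonneg _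
  have h3 : (0:ℝ) ≤ (inner ℝ p.2 p.2 : ℝ) := real_inner_self_nonneg
  rw [gfun]; linarith

def Dg {m q : ℕ} (k : ℝ) (p : Vspace m × Tspace q) : (Vspace m × Tspace q) →L[ℝ] ℝ :=
  (2 * k * (inner ℝ p.1 p.1 : ℝ) ^ (2 * k - 1)) •
      ((fderivInnerCLM ℝ (p.1, p.1)).comp
        ((ContinuousLinearMap.fst ℝ (Vspace m) (Tspace q)).prod (ContinuousLinearMap.fst ℝ _ _)))
    + (16 : ℝ) •
      ((fderivInnerCLM ℝ (p.2, p.2)).comp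
        ((ContinuousLinearMap.snd ℝ (Vspace m) (Tspace q)).prod (ContinuousLinearMap.snd ℝ _ _)))

lemma Dg_apply {m q : ℕ} (k : ℝ) (p v : Vspace m × Tspace q) :
    Dg k p v = 2 * k * (inner ℝ p.1 p.1 : ℝ) ^ (2 * k - 1) * (2 * (inner ℝ p.1 v.1 : ℝ))
      + 16 * (2 * (inner ℝ p.2 v.2 : ℝ)) := by
  simp only [Dg, ContinuousLinearMap.add_apply, ContinuousLinearMap.smul_apply,
    ContinuousLinearMap.comp_apply, ContinuousLinearMap.prod_apply, fderivInnerCLM_apply,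
    ContinuousLinearMap.coe_fst', ContinuousLinearMap.coe_snd', smul_eq_mul]
  rw [real_inner_comm v.1 p.1, real_inner_comm v.2 p.2]
  ring

lemma hasFDerivAt_gfun {m q : ℕ} (k ε : ℝ) (hk : 1 ≤ k) (p : Vspace m × Tspace q) :
    HasFDerivAt (gfun k ε) (Dg k p) p := by
  have h1 : HasFDerivAt (fun p : Vspace m × Tspace q => (inner ℝ p.1 p.1 : ℝ) ^ (2 * k))
      ((2 * k * (inner ℝ p.1 p.1 : ℝ) ^ (2 * k - 1)) •
        ((fderivInnerCLM ℝ (p.1, p.1)).comp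
          ((ContinuousLinearMap.fst ℝ (Vspace m) (Tspace q)).prod (ContinuousLinearMap.fst ℝ _ _)))) p :=
    (hasFDerivAt_fst.inner ℝ hasFDerivAt_fst).rpow_const (Or.inr (by linarith))
  have h2 : HasFDerivAt (fun p : Vspace m × Tspace q => 16 * (inner ℝ p.2 p.2 : ℝ))
      ((16 : ℝ) • ((fderivInnerCLM ℝ (p.2, p.2)).comp
        ((ContinuousLinearMap.snd ℝ (Vspace m) (Tspace q)).prod (ContinuousLinearMap.snd ℝ _ _)))) p :=
    (hasFDerivAt_snd.inner ℝ hasFDerivAt_snd).const_mul 16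
  exact ((h1.add h2).add_const (ε ^ (4 * k)))

lemma hasFDerivAt_dEps {m q : ℕ} (k ε : ℝ) (hk : 1 ≤ k) (hε : 0 < ε) (p : Vspace m × Tspace q) :
    HasFDerivAt (dEps k ε)
      ((1 / (4 * k) * gfun k ε p ^ (1 / (4 * k) - 1)) • Dg k p) p := by
  have : HasFDerivAt (fun p : Vspace m × Tspace q => gfun k ε p ^ (1 / (4 * k)))
      ((1 / (4 * k) * gfun k ε p ^ (1 / (4 * k) - 1)) • Dg k p) p :=
    (hasFDerivAt_gfun k ε hk p).rpow_const (Or.inl (gfun_pos k ε hε p).ne')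
  exact this.congr_of_eventuallyEq (by filter_upwards with x; rw [dEps_eq k ε hk])

def Ffun {m q : ℕ} (B : Vspace m →ₗ[ℝ] Vspace m →ₗ[ℝ] Tspace q)
    (e : Fin m → Vspace m) (k ε : ℝ) (j : Fin m) (p : Vspace m × Tspace q) : ℝ :=
  1 / (4 * k) * gfun k ε p ^ (1 / (4 * k) - 1) *
    (4 * k * (inner ℝ p.1 p.1 : ℝ) ^ (2 * k - 1) * (inner ℝ p.1 (e j) : ℝ)
      + 16 * k * (inner ℝ p.1 p.1 : ℝ) ^ (k - 1) * (inner ℝ p.2 (B p.1 (e j)) : ℝ))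

lemma Xop_dEps {m q : ℕ} (B : Vspace m →ₗ[ℝ] Vspace m →ₗ[ℝ] Tspace q)
    (e : Fin m → Vspace m) (k ε : ℝ) (hk : 1 ≤ k) (hε : 0 < ε) (j : Fin m) :
    Xop B e k (dEps k ε) j = Ffun B e k ε j := by
  funext p
  rw [Xop, (hasFDerivAt_dEps k ε hk hε p).fderiv]
  simp only [Ffun]
  have hc : ‖p.1‖ ^ (2 * k - 2) = (inner ℝ p.1 p.1 : ℝ) ^ (k - 1) := by
    rw [← norm_rpow_even p.1 (k - 1)]; ring_nf
  rw [ContinuousLinearMap.smul_apply, Dg_apply]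
  simp only [real_inner_smul_right, hc]
  rw [smul_eq_mul]
  ring

set_option maxHeartbeats 1000000 in
lemma Xop_Ffun {m q : ℕ} (B : Vspace m →ₗ[ℝ] Vspace m →ₗ[ℝ] Tspace q)
    (e : Fin m → Vspace m) (k ε : ℝ) (hk : 1 ≤ k) (hε : 0 < ε) (j : Fin m)
    (z : Vspace m) (t : Tspace q) (hz : z ≠ 0) :
    Xop B e k (Ffun B e k ε j) j (z, t) =
    (let H : ℝ := inner ℝ z z; let G : ℝ := gfun k ε (z, t);
     let A1 : ℝ := inner ℝ z (e j); let A2 : ℝ := inner ℝ t (B z (e j));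
     let A3 : ℝ := inner ℝ (e j) (e j); let A4 : ℝ := inner ℝ (B z (e j)) (B z (e j));
     let A5 : ℝ := inner ℝ t (B (e j) (e j));
     let P : ℝ := 4 * k * H ^ (2 * k - 1) * A1 + 16 * k * H ^ (k - 1) * A2;
     1 / (4 * k) * ((1 / (4 * k) - 1) * G ^ (1 / (4 * k) - 1 - 1) * P * P
        + G ^ (1 / (4 * k) - 1) *
          (4 * k * ((2 * k - 1) * H ^ (2 * k - 1 - 1) * (2 * A1) * A1 + H ^ (2 * k - 1) * A3)
            + 16 * k * ((k - 1) * H ^ (k - 1 - 1) * (2 * A1) * A2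
              + H ^ (k - 1) * (A5 + k / 2 * H ^ (k - 1) * A4))))) := by
  have hH0 : (inner ℝ z z : ℝ) ≠ 0 := by
    rw [real_inner_self_eq_norm_sq]
    exact pow_ne_zero 2 (norm_ne_zero_iff.2 hz)
  have hGne : gfun k ε (z, t) ≠ 0 := (gfun_pos k ε hε _).ne'
  have hHd : HasFDerivAt (fun p : Vspace m × Tspace q => (inner ℝ p.1 p.1 : ℝ))
      ((fderivInnerCLM ℝ ((z, t).1, (z, t).1)).comp
        ((ContinuousLinearMap.fst ℝ (Vspace m) (Tspace q)).prod
          (ContinuousLinearMap.fst ℝ _ _))) (z, t) :=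
    hasFDerivAt_fst.inner ℝ hasFDerivAt_fst
  have hip1 : HasFDerivAt (fun p : Vspace m × Tspace q => (inner ℝ p.1 (e j) : ℝ))
      ((fderivInnerCLM ℝ ((z, t).1, e j)).comp
        ((ContinuousLinearMap.fst ℝ (Vspace m) (Tspace q)).prod 0)) (z, t) :=
    hasFDerivAt_fst.inner ℝ (hasFDerivAt_const (e j) (z, t))
  set Bc : Vspace m →L[ℝ] Tspace q :=
    LinearMap.toContinuousLinearMap ((LinearMap.flip B) (e j)) with hBc
  have hBcf : HasFDerivAt (fun p : Vspace m × Tspace q => Bc p.1)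
      (Bc.comp (ContinuousLinearMap.fst ℝ (Vspace m) (Tspace q))) (z, t) :=
    Bc.hasFDerivAt.comp (z, t) hasFDerivAt_fst
  have hip2 : HasFDerivAt (fun p : Vspace m × Tspace q => (inner ℝ p.2 (Bc p.1) : ℝ))
      ((fderivInnerCLM ℝ ((z, t).2, Bc (z, t).1)).comp
        ((ContinuousLinearMap.snd ℝ (Vspace m) (Tspace q)).prod
          (Bc.comp (ContinuousLinearMap.fst ℝ (Vspace m) (Tspace q))))) (z, t) :=
    hasFDerivAt_snd.inner ℝ hBcf
  have hG := hasFDerivAt_gfun k ε hk (z, t) (q := q)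
  have hGb := hG.rpow_const (p := 1 / (4 * k) - 1) (Or.inl hGne)
  have hH1 := (hHd.rpow_const (p := 2 * k - 1) (Or.inl hH0)).const_mul (4 * k)
  have hH2 := (hHd.rpow_const (p := k - 1) (Or.inl hH0)).const_mul (16 * k)
  have hP := (hH1.mul hip1).add (hH2.mul hip2)
  have hFf := (hGb.const_mul (1 / (4 * k))).mul hP
  have hfun : Ffun B e k ε j
      = (fun p : Vspace m × Tspace q =>
      1 / (4 * k) * gfun k ε p ^ (1 / (4 * k) - 1) *
        (4 * k * (inner ℝ p.1 p.1 : ℝ) ^ (2 * k - 1) * (inner ℝ p.1 (e j) : ℝ)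
          + 16 * k * (inner ℝ p.1 p.1 : ℝ) ^ (k - 1) * (inner ℝ p.2 (Bc p.1) : ℝ))) := by
    funext p
    simp [Ffun, hBc, LinearMap.flip_apply]
  rw [Xop, hfun, (show HasFDerivAt (fun p : Vspace m × Tspace q =>
      1 / (4 * k) * gfun k ε p ^ (1 / (4 * k) - 1) *
        (4 * k * (inner ℝ p.1 p.1 : ℝ) ^ (2 * k - 1) * (inner ℝ p.1 (e j) : ℝ)
          + 16 * k * (inner ℝ p.1 p.1 : ℝ) ^ (k - 1) * (inner ℝ p.2 (Bc p.1) : ℝ))) _ (z, t)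
      from hFf).fderiv]
  have hc : ‖(z, t).1‖ ^ (2 * k - 2) = (inner ℝ z z : ℝ) ^ (k - 1) := by
    rw [show ((z, t).1 : Vspace m) = z from rfl, ← norm_rpow_even z (k - 1)]; ring_nf
  rw [hc]
  simp only [ContinuousLinearMap.add_apply, ContinuousLinearMap.smul_apply,
    ContinuousLinearMap.comp_apply, ContinuousLinearMap.prod_apply, fderivInnerCLM_apply,
    ContinuousLinearMap.coe_fst', ContinuousLinearMap.coe_snd', ContinuousLinearMap.zero_apply,
    Dg_apply, smul_eq_mul, real_inner_smul_right, real_inner_smul_left, inner_zero_right,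
    LinearMap.coe_toContinuousLinearMap', LinearMap.flip_apply, hBc, Pi.mul_apply, Pi.add_apply]
  rw [real_inner_comm (e j) z, real_inner_comm (B z (e j)) t]
  ring

section Ids
variable {m q : ℕ} (B : Vspace m →ₗ[ℝ] Vspace m →ₗ[ℝ] Tspace q)
  (hskew : ∀ u v : Vspace m, B u v = -B v u)
  (J : Tspace q → Vspace m →ₗ[ℝ] Vspace m)
  (hJ : ∀ (t : Tspace q) (u v : Vspace m), (inner ℝ (J t u) v : ℝ) = inner ℝ t (B u v))
  (hH : ∀ (t : Tspace q) (z : Vspace m), J t (J t z) = -(‖t‖ ^ 2) • z)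
  (e : OrthonormalBasis (Fin m) ℝ (Vspace m))

include hskew in
lemma Bself (u : Vspace m) : B u u = 0 := by
  have h := hskew u u
  have h2 : (2 : ℝ) • B u u = 0 := by
    rw [two_smul]
    nth_rewrite 2 [h]
    simp
  simpa using (smul_eq_zero.1 h2).resolve_left (by norm_num)

include hskew hJ in
lemma Jskew (t : Tspace q) (u v : Vspace m) :
    (inner ℝ (J t u) v : ℝ) = -(inner ℝ (J t v) u : ℝ) := by
  rw [hJ, hJ, hskew u v, inner_neg_right]

lemma sumI1 (z w : Vspace m) :
    ∑ j, (inner ℝ z (e j) : ℝ) * (inner ℝ w (e j) : ℝ) = (inner ℝ z w : ℝ) := by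
  rw [← e.sum_inner_mul_inner z w]
  congr 1; funext j; rw [real_inner_comm w (e j)]

include hskew hJ in
lemma sumI2 (z : Vspace m) (t : Tspace q) :
    ∑ j, (inner ℝ z (e j) : ℝ) * (inner ℝ t (B z (e j)) : ℝ) = 0 := by
  have h : ∀ j, (inner ℝ t (B z (e j)) : ℝ) = inner ℝ (J t z) (e j) := fun j => (hJ t z (e j)).symm
  simp only [h]
  rw [sumI1 e z (J t z), real_inner_comm]
  have := Jskew B hskew J hJ t z z
  linarith

include hskew hJ hH in
lemma JtzJtz (t : Tspace q) (z : Vspace m) :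
    (inner ℝ (J t z) (J t z) : ℝ) = (inner ℝ t t : ℝ) * (inner ℝ z z : ℝ) := by
  have h1 : (inner ℝ (J t z) (J t z) : ℝ) = -(inner ℝ (J t (J t z)) z : ℝ) :=
    Jskew B hskew J hJ t z (J t z)
  rw [h1, hH t z, real_inner_smul_left, real_inner_self_eq_norm_sq t,
    real_inner_self_eq_norm_sq z]
  ring

include hskew hJ hH in
lemma sumI5 (z : Vspace m) (t : Tspace q) :
    ∑ j, (inner ℝ t (B z (e j)) : ℝ) * (inner ℝ t (B z (e j)) : ℝ)
      = (inner ℝ t t : ℝ) * (inner ℝ z z : ℝ) := by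
  have h : ∀ j, (inner ℝ t (B z (e j)) : ℝ) = inner ℝ (J t z) (e j) := fun j => (hJ t z (e j)).symm
  simp only [h]
  rw [sumI1 e (J t z) (J t z)]
  exact JtzJtz B hskew J hJ hH t z

lemma sumI3 : ∑ j, (inner ℝ (e j) (e j) : ℝ) = (m : ℝ) := by
  have h : ∀ j, (inner ℝ (e j) (e j) : ℝ) = 1 := by
    intro j
    rw [real_inner_self_eq_norm_sq, e.orthonormal.1 j]; norm_num
  simp [h]

include hskew hJ hH in
lemma sumI4 (z : Vspace m) (t : Tspace q) :
    ∑ j, (inner ℝ (B z (e j)) (B z (e j)) : ℝ) = (q : ℝ) * (inner ℝ z z : ℝ) := by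
  set f : OrthonormalBasis (Fin q) ℝ (Tspace q) :=
    EuclideanSpace.basisFun (Fin q) ℝ with hf
  have hexp : ∀ j, (inner ℝ (B z (e j)) (B z (e j)) : ℝ)
      = ∑ i, (inner ℝ (f i) (B z (e j)) : ℝ) * (inner ℝ (f i) (B z (e j)) : ℝ) := by
    intro j
    rw [← f.sum_inner_mul_inner (B z (e j)) (B z (e j))]
    congr 1; funext i; rw [real_inner_comm (B z (e j)) (f i)]
  simp only [hexp]
  rw [Finset.sum_comm]
  have hrow : ∀ i, ∑ j, (inner ℝ (f i) (B z (e j)) : ℝ) * (inner ℝ (f i) (B z (e j)) : ℝ)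
      = (inner ℝ z z : ℝ) := by
    intro i
    have h : ∀ j, (inner ℝ (f i) (B z (e j)) : ℝ) = inner ℝ (J (f i) z) (e j) :=
      fun j => (hJ (f i) z (e j)).symm
    simp only [h]
    rw [sumI1 e (J (f i) z) (J (f i) z), JtzJtz B hskew J hJ hH (f i) z]
    have : (inner ℝ (f i) (f i) : ℝ) = 1 := by
      rw [real_inner_self_eq_norm_sq, f.orthonormal.1 i]; norm_num
    rw [this, one_mul]
  rw [Finset.sum_congr rfl (fun i _ => hrow i), Finset.sum_const, Finset.card_univ,
    Fintype.card_fin, nsmul_eq_mul]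
end Ids

set_option maxHeartbeats 1000000 in
/-- For `z ≠ 0`,
`Σ_j X_j² d_ε = d_ε^{1-4k}|z|^{4k-2}(4k+Q-2 - (4k-1)d^{4k}d_ε^{-4k})`,
where `Q = m + 2kq`. -/
theorem stmt5 {m q : ℕ} (hm : 1 ≤ m) (hq : 1 ≤ q)
    (B : Vspace m →ₗ[ℝ] Vspace m →ₗ[ℝ] Tspace q)
    (hskew : ∀ u v : Vspace m, B u v = -B v u)
    (J : Tspace q → Vspace m →ₗ[ℝ] Vspace m)
    (hJ : ∀ (t : Tspace q) (u v : Vspace m),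
      (inner ℝ (J t u) v : ℝ) = inner ℝ t (B u v))
    (hH : ∀ (t : Tspace q) (z : Vspace m), J t (J t z) = -(‖t‖ ^ 2) • z)
    (e : OrthonormalBasis (Fin m) ℝ (Vspace m)) (k : ℝ) (hk : 1 ≤ k)
    (Q : ℝ) (hQ : Q = m + 2 * k * q)
    (ε : ℝ) (hε : 0 < ε) (z : Vspace m) (t : Tspace q) (hz : z ≠ 0) :
    ∑ j, Xop B (⇑e) k (Xop B (⇑e) k (dEps k ε) j) j (z, t) =
      dEps k ε (z, t) ^ (1 - 4 * k) * ‖z‖ ^ (4 * k - 2) *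
        (4 * k + Q - 2 -
          (4 * k - 1) * dfun k (z, t) ^ (4 * k) * dEps k ε (z, t) ^ (-(4 * k))) := by
  have hk0 : (k : ℝ) ≠ 0 := by linarith
  have hGpos : 0 < gfun k ε (z, t) := gfun_pos k ε hε _
  have hGne := hGpos.ne'
  have hHpos : (0 : ℝ) < inner ℝ z z := by
    rw [real_inner_self_eq_norm_sq]
    exact pow_pos (norm_pos_iff.2 hz) 2
  have hHne := hHpos.ne'
  set H : ℝ := (inner ℝ z z : ℝ) with hHdef
  set G : ℝ := gfun k ε (z, t) with hGdef
  set T : ℝ := (inner ℝ t t : ℝ) with hTdef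
  -- coefficients
  set C1 : ℝ := 1 / (4 * k) * ((1 / (4 * k) - 1) * G ^ (1 / (4 * k) - 1 - 1) *
      (16 * k ^ 2 * (H ^ (2 * k - 1) * H ^ (2 * k - 1)))
    + G ^ (1 / (4 * k) - 1) * (8 * k * (2 * k - 1) * H ^ (2 * k - 1 - 1))) with hC1
  set C2 : ℝ := 1 / (4 * k) * ((1 / (4 * k) - 1) * G ^ (1 / (4 * k) - 1 - 1) *
      (128 * k ^ 2 * (H ^ (2 * k - 1) * H ^ (k - 1)))
    + G ^ (1 / (4 * k) - 1) * (32 * k * (k - 1) * H ^ (k - 1 - 1))) with hC2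
  set C3 : ℝ := 1 / (4 * k) * ((1 / (4 * k) - 1) * G ^ (1 / (4 * k) - 1 - 1) *
      (256 * k ^ 2 * (H ^ (k - 1) * H ^ (k - 1)))) with hC3
  set C4 : ℝ := 1 / (4 * k) * (G ^ (1 / (4 * k) - 1) * (4 * k * H ^ (2 * k - 1))) with hC4
  set C5 : ℝ := 1 / (4 * k) * (G ^ (1 / (4 * k) - 1) *
      (8 * k ^ 2 * (H ^ (k - 1) * H ^ (k - 1)))) with hC5
  have hL : ∑ j, Xop B (⇑e) k (Xop B (⇑e) k (dEps k ε) j) j (z, t)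
      = ∑ j, (C1 * ((inner ℝ z (e j) : ℝ) * (inner ℝ z (e j) : ℝ))
          + C2 * ((inner ℝ z (e j) : ℝ) * (inner ℝ t (B z (e j)) : ℝ))
          + C3 * ((inner ℝ t (B z (e j)) : ℝ) * (inner ℝ t (B z (e j)) : ℝ))
          + C4 * (inner ℝ (e j) (e j) : ℝ)
          + C5 * (inner ℝ (B z (e j)) (B z (e j)) : ℝ)) := by
    refine Finset.sum_congr rfl fun j _ => ?_
    rw [Xop_dEps B (⇑e) k ε hk hε j, Xop_Ffun B (⇑e) k ε hk hε j z t hz]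
    dsimp only
    rw [Bself B hskew (e j), inner_zero_right, hC1, hC2, hC3, hC4, hC5, hHdef, hGdef]
    ring
  rw [hL]
  simp only [Finset.sum_add_distrib, ← Finset.mul_sum]
  rw [sumI1 e z z, sumI2 B hskew J hJ e z t, sumI5 B hskew J hJ hH e z t, sumI3 e,
    sumI4 B hskew J hJ hH e z t, ← hTdef, ← hHdef]
  -- rewrite the right-hand side
  rw [dEps_eq k ε hk (z, t), dfun_rpow k hk (z, t)]
  rw [show ((z, t) : Vspace m × Tspace q).1 = z from rfl,
    show ((z, t) : Vspace m × Tspace q).2 = t from rfl]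
  rw [← Real.rpow_mul hGpos.le (1 / (4 * k)) (1 - 4 * k),
    ← Real.rpow_mul hGpos.le (1 / (4 * k)) (-(4 * k))]
  have he1 : 1 / (4 * k) * (1 - 4 * k) = 1 / (4 * k) - 1 := by field_simp
  have he2 : 1 / (4 * k) * (-(4 * k)) = -1 := by field_simp
  rw [he1, he2, Real.rpow_neg_one]
  have hnz : ‖z‖ ^ (4 * k - 2) = H ^ (2 * k - 1) := by
    rw [hHdef, ← norm_rpow_even z (2 * k - 1)]; ring_nf
  rw [hnz]
  -- power algebra
  have hGsplit : G ^ (1 / (4 * k) - 1 - 1) = G ^ (1 / (4 * k) - 1) * G⁻¹ := by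
    rw [show (1 / (4 * k) - 1 - 1 : ℝ) = (1 / (4 * k) - 1) + (-1) by ring,
      Real.rpow_add hGpos, Real.rpow_neg_one]
  have hH1 : H ^ (2 * k - 1) = H ^ (k - 1) * H ^ (k - 1) * H := by
    rw [show (2 * k - 1 : ℝ) = (k - 1) + ((k - 1) + 1) by ring,
      Real.rpow_add hHpos, Real.rpow_add hHpos, Real.rpow_one]
    ring
  have hH11 : H ^ (2 * k - 1 - 1) = H ^ (k - 1) * H ^ (k - 1) := by
    rw [show (2 * k - 1 - 1 : ℝ) = (k - 1) + (k - 1) by ring, Real.rpow_add hHpos]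
  have hHk1 : H ^ (k - 1 - 1) = H ^ (k - 1) * H⁻¹ := by
    rw [show (k - 1 - 1 : ℝ) = (k - 1) + (-1) by ring, Real.rpow_add hHpos,
      Real.rpow_neg_one]
  have hH2k : H ^ (2 * k) = H ^ (k - 1) * H ^ (k - 1) * H * H := by
    rw [show (2 * k : ℝ) = (k - 1) + ((k - 1) + (1 + 1)) by ring,
      Real.rpow_add hHpos, Real.rpow_add hHpos, Real.rpow_add hHpos, Real.rpow_one]
    ring
  rw [hC1, hC2, hC3, hC4, hC5, hGsplit, hH1, hH11, hHk1, hH2k, hQ, ← hTdef]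
  clear_value H G T
  field_simp
  ring
end
end

section
/- For every real γ ≥ 0 one has ∫_{{(z,t) ∈ V×𝔱 : d(z,t) < 1}} |z|^γ dz dt = (1/(2(γ+Q))) · (1/4)^{q−1} · π^{(q+m)/2} · Γ((γ+m)/(4k)) / ( Γ(m/2) · Γ((γ+Q)/(4k)) ), where Q = m + 2kq and the integral is with respect to Lebesgue measure on V × 𝔱 ≅ ℝ^{m+q}. -/
open MeasureTheory Real

noncomputable section

section AuxLemmas
open Set

lemma realBeta {a b : ℝ} (ha : 0 < a) (hb : 0 < b) :
    ∫ x in (0:ℝ)..1, x ^ (a - 1) * (1 - x) ^ (b - 1) =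
      Real.Gamma a * Real.Gamma b / Real.Gamma (a + b) := by
  have h := Complex.Gamma_mul_Gamma_eq_betaIntegral (s := (a:ℂ)) (t := (b:ℂ))
    (by simpa using ha) (by simpa using hb)
  have hbeta : Complex.betaIntegral a b =
      ((∫ x in (0:ℝ)..1, x ^ (a - 1) * (1 - x) ^ (b - 1) : ℝ) : ℂ) := by
    rw [Complex.betaIntegral, ← intervalIntegral.integral_ofReal]
    refine intervalIntegral.integral_congr fun x hx => ?_
    rw [Set.uIcc_of_le (by norm_num : (0:ℝ) ≤ 1)] at hx
    obtain ⟨hx0, hx1⟩ := hx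
    rw [show ((a:ℂ) - 1) = ((a - 1 : ℝ) : ℂ) by push_cast; ring,
      show ((b:ℂ) - 1) = ((b - 1 : ℝ) : ℂ) by push_cast; ring,
      show (1 - (x:ℂ)) = ((1 - x : ℝ) : ℂ) by push_cast; ring,
      Complex.ofReal_mul, ← Complex.ofReal_cpow hx0, ← Complex.ofReal_cpow (by linarith)]
  rw [hbeta, ← Complex.ofReal_add, Complex.Gamma_ofReal, Complex.Gamma_ofReal,
    Complex.Gamma_ofReal, ← Complex.ofReal_mul, ← Complex.ofReal_mul] at h
  have h' : Real.Gamma a * Real.Gamma b =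
      Real.Gamma (a + b) * ∫ x in (0:ℝ)..1, x ^ (a - 1) * (1 - x) ^ (b - 1) := by
    exact_mod_cast h
  have hG : Real.Gamma (a + b) ≠ 0 := (Real.Gamma_pos_of_pos (by linarith)).ne'
  field_simp at h' ⊢
  linarith [h']

lemma aux1d (m q : ℕ) (hm : 1 ≤ m) (hq : 1 ≤ q) {k γ : ℝ} (hk : 1 ≤ k) (hγ : 0 ≤ γ) :
    ∫ r in Set.Ioi (0:ℝ), r ^ (m - 1) * r ^ γ * Real.sqrt (1 - r ^ (4 * k)) ^ q =
      1 / (4 * k) * (Real.Gamma ((γ + m) / (4 * k)) * Real.Gamma ((q:ℝ) / 2 + 1) /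
        Real.Gamma ((γ + m) / (4 * k) + ((q:ℝ) / 2 + 1))) := by
  have hp : (0:ℝ) < 4 * k := by linarith
  have hp0 : (4 * k : ℝ) ≠ 0 := hp.ne'
  set a : ℝ := (γ + m) / (4 * k) with ha_def
  set b : ℝ := (q:ℝ) / 2 + 1 with hb_def
  have hm' : (1:ℝ) ≤ m := by exact_mod_cast hm
  have ha : 0 < a := div_pos (by linarith) hp
  have hb : 0 < b := by positivity
  set g : ℝ → ℝ := fun u => (1 / (4*k)) * (u ^ (a - 1) * Real.sqrt (1 - u) ^ q) with hg
  have step1 : (∫ x in Ioi (0:ℝ), (|4*k| * x ^ (4*k - 1)) • g (x ^ (4*k)))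
      = ∫ r in Ioi (0:ℝ), r ^ (m - 1) * r ^ γ * Real.sqrt (1 - r ^ (4 * k)) ^ q := by
    refine setIntegral_congr_fun measurableSet_Ioi fun x hx => ?_
    have hx0 : (0:ℝ) < x := hx
    rw [smul_eq_mul, hg]
    simp only []
    rw [abs_of_pos hp, ← Real.rpow_natCast x (m-1), ← Real.rpow_mul hx0.le,
      Nat.cast_sub hm, Nat.cast_one, ← Real.rpow_add hx0]
    have hcomb : x ^ (4*k - 1) * x ^ (4*k*(a-1)) = x ^ ((m:ℝ) - 1 + γ) := by
      rw [← Real.rpow_add hx0]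
      congr 1
      have h4 : a * (4*k) = γ + m := div_mul_cancel₀ _ hp0
      nlinarith
    calc 4 * k * x ^ (4*k - 1) * (1 / (4*k) * (x ^ (4*k*(a-1)) * Real.sqrt (1 - x ^ (4*k)) ^ q))
        = (x ^ (4*k - 1) * x ^ (4*k*(a-1))) * Real.sqrt (1 - x ^ (4*k)) ^ q := by
          field_simp
      _ = x ^ ((m:ℝ) - 1 + γ) * Real.sqrt (1 - x ^ (4*k)) ^ q := by rw [hcomb]
  rw [← step1, integral_comp_rpow_Ioi g hp0, hg]
  simp only []
  rw [MeasureTheory.integral_const_mul]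
  have step2 : ∫ u in Ioi (0:ℝ), u ^ (a - 1) * Real.sqrt (1 - u) ^ q
      = ∫ u in Ioc (0:ℝ) 1, u ^ (a - 1) * (1 - u) ^ (b - 1) := by
    have h1 : ∀ u ∈ Ioi (0:ℝ), u ^ (a-1) * Real.sqrt (1-u) ^ q
        = (Ioc (0:ℝ) 1).indicator (fun u => u ^ (a-1) * (1-u) ^ (b-1)) u := by
      intro u hu
      by_cases h : u ≤ 1
      · rw [Set.indicator_of_mem (Set.mem_Ioc.mpr ⟨hu, h⟩)]
        congr 1
        rw [← Real.rpow_natCast (Real.sqrt (1-u)) q, Real.sqrt_eq_rpow,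
          ← Real.rpow_mul (by linarith)]
        congr 1
        rw [hb_def]; ring
      · rw [Set.indicator_of_notMem (fun hmem => h hmem.2),
          Real.sqrt_eq_zero_of_nonpos (by linarith), zero_pow (by omega), mul_zero]
    rw [setIntegral_congr_fun measurableSet_Ioi h1, integral_indicator measurableSet_Ioc,
      Measure.restrict_restrict measurableSet_Ioc,
      inter_eq_self_of_subset_left Ioc_subset_Ioi_self]
  rw [step2, ← intervalIntegral.integral_of_le zero_le_one, realBeta ha hb]

end AuxLemmas

set_option maxHeartbeats 1000000 in
/-- For `γ ≥ 0`,
`∫_{d<1} |z|^γ = (1/(2(γ+Q))) (1/4)^{q-1} π^{(q+m)/2} Γ((γ+m)/(4k)) / (Γ(m/2) Γ((γ+Q)/(4k)))`,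
where `Q = m + 2kq`. -/
theorem stmt8 {m q : ℕ} (hm : 1 ≤ m) (hq : 1 ≤ q) (k : ℝ) (hk : 1 ≤ k)
    (Q : ℝ) (hQ : Q = m + 2 * k * q) (γ : ℝ) (hγ : 0 ≤ γ) :
    ∫ p in {p : Vspace m × Tspace q | dfun k p < 1}, ‖p.1‖ ^ γ =
      1 / (2 * (γ + Q)) * ((1 / 4 : ℝ) ^ ((q : ℝ) - 1)) *
        π ^ (((q : ℝ) + m) / 2) * Real.Gamma ((γ + m) / (4 * k)) /
        (Real.Gamma ((m : ℝ) / 2) * Real.Gamma ((γ + Q) / (4 * k))) := by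
  haveI : Nonempty (Fin m) := ⟨⟨0, hm⟩⟩
  haveI : Nonempty (Fin q) := ⟨⟨0, hq⟩⟩
  have hp : (0:ℝ) < 4 * k := by linarith
  have hm' : (1:ℝ) ≤ (m:ℝ) := by exact_mod_cast hm
  have hq' : (1:ℝ) ≤ (q:ℝ) := by exact_mod_cast hq
  set S : Set (Vspace m × Tspace q) := {p | ‖p.1‖ ^ (4*k) + 16 * ‖p.2‖ ^ (2:ℝ) < 1} with hS_def
  have hset : {p : Vspace m × Tspace q | dfun k p < 1} = S := by
    ext p
    simp only [Set.mem_setOf_eq, dfun, hS_def]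
    rw [Real.rpow_lt_one_iff' (by positivity) (by positivity)]
  have hSopen : IsOpen S := by
    have hcont : Continuous fun p : Vspace m × Tspace q =>
        ‖p.1‖ ^ (4*k) + 16 * ‖p.2‖ ^ (2:ℝ) :=
      ((continuous_fst.norm.rpow_const fun _ => Or.inr hp.le).add
        (continuous_const.mul (continuous_snd.norm.rpow_const fun _ => Or.inr (by norm_num))))
    exact isOpen_lt hcont continuous_const
  have hsub : S ⊆ (Metric.closedBall (0:Vspace m) 1) ×ˢ (Metric.closedBall (0:Tspace q) 1) := by
    rintro ⟨z, t⟩ h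
    simp only [hS_def, Set.mem_setOf_eq] at h
    have h1 : ‖z‖ ^ (4*k) < 1 := by
      have : (0:ℝ) ≤ 16 * ‖t‖ ^ (2:ℝ) := by positivity
      linarith
    have h2 : 16 * ‖t‖ ^ (2:ℝ) < 1 := by
      have : (0:ℝ) ≤ ‖z‖ ^ (4*k) := by positivity
      linarith
    constructor <;> simp only [Metric.mem_closedBall, dist_zero_right]
    · by_contra hzc
      push_neg at hzc
      have := Real.rpow_le_rpow zero_le_one hzc.le hp.le
      rw [Real.one_rpow] at this
      linarith
    · rw [Real.rpow_two] at h2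
      nlinarith [norm_nonneg t]
  have hIntOn : IntegrableOn (fun p : Vspace m × Tspace q => ‖p.1‖ ^ γ) S := by
    have hc : Continuous fun p : Vspace m × Tspace q => ‖p.1‖ ^ γ :=
      continuous_fst.norm.rpow_const fun _ => Or.inr hγ
    exact (hc.continuousOn.integrableOn_compact
      ((isCompact_closedBall _ _).prod (isCompact_closedBall _ _))).mono_set hsub
  set c1 : ℝ := Real.sqrt π ^ q / Real.Gamma ((q:ℝ)/2 + 1) with hc1_def
  have hΓq : 0 < Real.Gamma ((q:ℝ)/2 + 1) := Real.Gamma_pos_of_pos (by positivity)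
  have hc1 : 0 ≤ c1 := div_nonneg (pow_nonneg (Real.sqrt_nonneg _) _) hΓq.le
  have inner : ∀ z : Vspace m, (∫ t : Tspace q, S.indicator (fun p => ‖p.1‖^γ) (z, t))
      = ‖z‖^γ * ((Real.sqrt (1 - ‖z‖^(4*k)) / 4) ^ q * c1) := by
    intro z
    have hball : {t : Tspace q | (z, t) ∈ S}
        = Metric.ball 0 (Real.sqrt (1 - ‖z‖^(4*k)) / 4) := by
      ext t
      simp only [hS_def, Set.mem_setOf_eq, Metric.mem_ball, dist_zero_right]
      rw [Real.rpow_two]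
      constructor
      · intro h
        have h4 : 4*‖t‖ < Real.sqrt (1 - ‖z‖^(4*k)) :=
          (Real.lt_sqrt (by positivity)).mpr (by nlinarith)
        linarith
      · intro h
        have h4 : 4*‖t‖ < Real.sqrt (1 - ‖z‖^(4*k)) := by linarith
        have := (Real.lt_sqrt (by positivity)).mp h4
        nlinarith
    have hfun : (fun t : Tspace q => S.indicator (fun p => ‖p.1‖^γ) (z, t))
        = (Metric.ball (0:Tspace q) (Real.sqrt (1 - ‖z‖^(4*k)) / 4)).indicator
            (fun _ => ‖z‖^γ) := by
      funext t
      by_cases h : (z, t) ∈ S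
      · rw [Set.indicator_of_mem h, Set.indicator_of_mem (hball ▸ h)]
      · rw [Set.indicator_of_notMem h, Set.indicator_of_notMem (hball ▸ h)]
    rw [hfun, integral_indicator measurableSet_ball, setIntegral_const, smul_eq_mul,
      measureReal_def, EuclideanSpace.volume_ball]
    simp only [Fintype.card_fin]
    rw [ENNReal.toReal_mul, ← ENNReal.ofReal_pow (by positivity),
      ENNReal.toReal_ofReal (by positivity), ENNReal.toReal_ofReal (by positivity)]
    rw [hc1_def]
    ring
  have hInt : Integrable (S.indicator fun p : Vspace m × Tspace q => ‖p.1‖^γ)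
      ((volume : Measure (Vspace m)).prod (volume : Measure (Tspace q))) := by
    rw [← MeasureTheory.Measure.volume_eq_prod]
    exact (integrable_indicator_iff hSopen.measurableSet).mpr hIntOn
  rw [hset, ← integral_indicator hSopen.measurableSet, MeasureTheory.Measure.volume_eq_prod,
    MeasureTheory.integral_prod _ hInt]
  simp_rw [inner]
  have hpolar := MeasureTheory.integral_fun_norm_addHaar (volume : Measure (Vspace m))
    (fun r : ℝ => r^γ * ((Real.sqrt (1 - r^(4*k)) / 4) ^ q * c1))
  simp only [finrank_euclideanSpace_fin] at hpolar
  rw [hpolar, measureReal_def, EuclideanSpace.volume_ball]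
  simp only [Fintype.card_fin]
  rw [ENNReal.ofReal_one, one_pow, one_mul, ENNReal.toReal_ofReal (by positivity)]
  have hsimp : ∀ r : ℝ, r^(m-1) • (r^γ * ((Real.sqrt (1 - r^(4*k)) / 4) ^ q * c1))
      = (c1/4^q) * (r^(m-1) * r^γ * Real.sqrt (1 - r^(4*k)) ^ q) := by
    intro r
    rw [smul_eq_mul, div_pow]
    ring
  simp_rw [hsimp]
  rw [MeasureTheory.integral_const_mul, aux1d m q hm hq hk hγ]
  -- final arithmetic
  rw [nsmul_eq_mul, smul_eq_mul]
  have hΓm : 0 < Real.Gamma ((m:ℝ)/2) := Real.Gamma_pos_of_pos (by positivity)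
  have hs_eq : (γ + (m:ℝ))/(4*k) + ((q:ℝ)/2 + 1) = (γ + Q)/(4*k) + 1 := by
    rw [hQ]; field_simp; ring
  have hsd : 0 < (γ + Q)/(4*k) := by
    rw [hQ]
    have : 0 < γ + ((m:ℝ) + 2*k*q) := by nlinarith
    positivity
  have hΓs : 0 < Real.Gamma ((γ + Q)/(4*k)) := Real.Gamma_pos_of_pos hsd
  rw [hs_eq, Real.Gamma_add_one hsd.ne', show (m:ℝ)/2 + 1 = (m/2 : ℝ) + 1 from rfl,
    Real.Gamma_add_one (by positivity : ((m:ℝ)/2) ≠ 0)]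
  have hpi : (Real.sqrt π : ℝ) ^ m * Real.sqrt π ^ q = π ^ (((q:ℝ) + m) / 2) := by
    rw [Real.sqrt_eq_rpow, ← Real.rpow_natCast (π ^ ((1:ℝ)/2)) m,
      ← Real.rpow_natCast (π ^ ((1:ℝ)/2)) q, ← Real.rpow_mul pi_pos.le,
      ← Real.rpow_mul pi_pos.le, ← Real.rpow_add pi_pos]
    congr 1
    ring
  have hq4 : ((1:ℝ)/4) ^ ((q:ℝ) - 1) = 4 / 4^q := by
    rw [Real.div_rpow zero_le_one (by norm_num), Real.one_rpow,
      Real.rpow_sub (by norm_num : (0:ℝ) < 4), Real.rpow_one, Real.rpow_natCast,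
      one_div_div]
  rw [hc1_def, hq4]
  have h4q : (0:ℝ) < 4^q := by positivity
  have hγQ : 0 < γ + Q := by
    rw [hQ]; nlinarith
  field_simp
  rw [← hpi]
  ring
end
end
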